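/- For every n ≥ 1, every homogeneous element of total degree 3 of the toric ideal I_{K_n} of the complete graph K_n lies in the ideal of R_{K_n} generated by the elements of I_{K_n} of total degree at most 2; equivalently, I_{K_n} has no minimal generators of degree 3. -/

import Mathlib

open MvPolynomial Finset

namespace BinaryGraphModels

variable {V : Type} [Fintype V] [DecidableEq V]

/-- The monomial map `φ_G` of the binary graph model: the variable `p_I` is sent to the
product over edges `{j,k}` of the variable `t^{jk}_{I(j)I(k)}` (encoded as the unordered pair
`{(j, I j), (k, I k)}`) times the product over isolated vertices `l` of `t^{l}_{I(l)}`. -/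
noncomputable def phi (G : SimpleGraph V) :
    MvPolynomial (V → Bool) ℂ →ₐ[ℂ] MvPolynomial (Sym2 (V × Bool) ⊕ (V × Bool)) ℂ := by
  letI : DecidableRel G.Adj := Classical.decRel _
  exact aeval fun I : V → Bool =>
    (∏ e ∈ G.edgeFinset,
      (X (Sum.inl (Sym2.map (fun v => (v, I v)) e)) :
        MvPolynomial (Sym2 (V × Bool) ⊕ (V × Bool)) ℂ)) *
    ∏ l ∈ univ.filter (fun l : V => ∀ k, ¬ G.Adj l k), X (Sum.inr (l, I l))

/-- The toric ideal `I_G` of the binary graph model of `G`. -/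
noncomputable def toricIdeal (G : SimpleGraph V) : Ideal (MvPolynomial (V → Bool) ℂ) :=
  RingHom.ker (phi G).toRingHom

/-- `I_G` is generated in degree at most `d`. -/
def GenInDegLE (G : SimpleGraph V) (d : ℕ) : Prop :=
  toricIdeal G =
    Ideal.span {f : MvPolynomial (V → Bool) ℂ | f ∈ toricIdeal G ∧ f.totalDegree ≤ d}

/-- The Markov width `μ(G)`: the least `d` such that `I_G` is generated in degree `≤ d`. -/
noncomputable def markovWidth (G : SimpleGraph V) : ℕ :=
  sInf {d : ℕ | GenInDegLE G d}

/-- `f` is a minimal generator of `I_G`, i.e. `f ∈ I_G` and `f ∉ 𝔪 · I_G` where `𝔪` is the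
irrelevant maximal ideal generated by all the variables. -/
def IsMinimalGenerator (G : SimpleGraph V) (f : MvPolynomial (V → Bool) ℂ) : Prop :=
  f ∈ toricIdeal G ∧
    f ∉ Ideal.span (Set.range (X : (V → Bool) → MvPolynomial (V → Bool) ℂ)) * toricIdeal G

/-- Two integer tables have the same `G`-marginals: equal two-way marginals along every edge
and equal one-way marginals at every isolated vertex. -/
def MarginalsEq (G : SimpleGraph V) (v₁ v₂ : (V → Bool) → ℤ) : Prop :=
  (∀ j k : V, G.Adj j k → ∀ a b : Bool,
    (∑ I : V → Bool, if I j = a ∧ I k = b then v₁ I else 0) =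
    (∑ I : V → Bool, if I j = a ∧ I k = b then v₂ I else 0)) ∧
  (∀ l : V, (∀ k, ¬ G.Adj l k) → ∀ a : Bool,
    (∑ I : V → Bool, if I l = a then v₁ I else 0) =
    (∑ I : V → Bool, if I l = a then v₂ I else 0))

/-- `B` is a Markov basis for `G`: any two nonnegative tables with the same `G`-marginals are
connected by a path of moves from `±B` staying nonnegative. -/
def IsMarkovBasis (G : SimpleGraph V) (B : Finset ((V → Bool) → ℤ)) : Prop :=
  ∀ v₁ v₂ : (V → Bool) → ℤ, (∀ I, 0 ≤ v₁ I) → (∀ I, 0 ≤ v₂ I) →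
    MarginalsEq G v₁ v₂ →
    ∃ L : List ((V → Bool) → ℤ),
      (∀ u ∈ L, u ∈ B ∨ -u ∈ B) ∧
      v₁ + L.sum = v₂ ∧
      ∀ n : ℕ, n ≤ L.length → ∀ I, 0 ≤ (v₁ + (L.take n).sum) I

/-- The binomial `p^{u⁺} - p^{u⁻}` associated to an integer table `u`. -/
noncomputable def moveBinomial (u : (V → Bool) → ℤ) : MvPolynomial (V → Bool) ℂ :=
  (∏ I : V → Bool, X I ^ (u I).toNat) - ∏ I : V → Bool, X I ^ (-u I).toNat

end BinaryGraphModels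

namespace BinaryGraphModels

section AuxiliaryLemmas

variable {V : Type} [Fintype V] [DecidableEq V]

/-- The exponent vector of the image of the variable `p_I` under `φ_G`. -/
noncomputable def wG (G : SimpleGraph V) (I : V → Bool) :
    (Sym2 (V × Bool) ⊕ (V × Bool)) →₀ ℕ := by
  letI : DecidableRel G.Adj := Classical.decRel _
  exact (∑ e ∈ G.edgeFinset,
      Finsupp.single (Sum.inl (Sym2.map (fun v => (v, I v)) e)) 1) +
    ∑ l ∈ univ.filter (fun l : V => ∀ k, ¬ G.Adj l k), Finsupp.single (Sum.inr (l, I l)) 1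

lemma phi_X (G : SimpleGraph V) (I : V → Bool) :
    phi G (X I) = monomial (wG G I) 1 := by
  letI : DecidableRel G.Adj := Classical.decRel _
  unfold phi wG
  rw [aeval_X,
    show (monomial ((∑ e ∈ G.edgeFinset,
        Finsupp.single (Sum.inl (Sym2.map (fun v => (v, I v)) e)) 1) +
      ∑ l ∈ univ.filter (fun l : V => ∀ k, ¬ G.Adj l k),
        Finsupp.single (Sum.inr (l, I l)) 1)
      (1 : ℂ)) = monomial (∑ e ∈ G.edgeFinset,
        Finsupp.single (Sum.inl (Sym2.map (fun v => (v, I v)) e)) 1) 1 *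
      monomial (∑ l ∈ univ.filter (fun l : V => ∀ k, ¬ G.Adj l k),
        Finsupp.single (Sum.inr (l, I l)) 1) 1 from by rw [monomial_mul, one_mul],
    monomial_sum_one, monomial_sum_one]
  rfl

/-- The exponent vector of the image of a monomial under `φ_G`. -/
noncomputable def Aexp (G : SimpleGraph V) (d : (V → Bool) →₀ ℕ) :
    (Sym2 (V × Bool) ⊕ (V × Bool)) →₀ ℕ :=
  d.sum fun I n => n • wG G I

lemma phi_monomial (G : SimpleGraph V) (d : (V → Bool) →₀ ℕ) (c : ℂ) :
    phi G (monomial d c) = monomial (Aexp G d) c := by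
  have hC : phi G (C c) = C c := by
    have h := (phi G).commutes c
    rwa [algebraMap_eq, algebraMap_eq] at h
  rw [monomial_eq, map_mul, hC, map_finsuppProd, Aexp, monomial_finsupp_sum_index]
  congr 1
  refine Finsupp.prod_congr fun I n => ?_
  rw [map_pow, phi_X, monomial_pow, one_pow]

lemma Aexp_apply (G : SimpleGraph V) (d : (V → Bool) →₀ ℕ)
    (z : Sym2 (V × Bool) ⊕ (V × Bool)) :
    Aexp G d z = ∑ I ∈ d.support, d I * wG G I z := by
  rw [Aexp, Finsupp.sum, Finsupp.finset_sum_apply]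
  exact Finset.sum_congr rfl fun I _ => by rw [Finsupp.smul_apply, smul_eq_mul]

lemma sym2_map_eq_iff (I : V → Bool) {j k : V} (hjk : j ≠ k) (a b : Bool) (e : Sym2 V) :
    Sym2.map (fun v => (v, I v)) e = s((j, a), (k, b)) ↔
      e = s(j, k) ∧ I j = a ∧ I k = b := by
  induction e using Sym2.inductionOn with
  | hf x y =>
    rw [Sym2.map_pair_eq, Sym2.eq_iff, Sym2.eq_iff, Prod.ext_iff, Prod.ext_iff,
      Prod.ext_iff, Prod.ext_iff]
    constructor
    · rintro (⟨⟨rfl, ha⟩, ⟨rfl, hb⟩⟩ | ⟨⟨rfl, ha⟩, ⟨rfl, hb⟩⟩)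
      · exact ⟨Or.inl ⟨rfl, rfl⟩, ha, hb⟩
      · exact ⟨Or.inr ⟨rfl, rfl⟩, hb, ha⟩
    · rintro ⟨(⟨rfl, rfl⟩ | ⟨rfl, rfl⟩), ha, hb⟩
      · exact Or.inl ⟨⟨rfl, ha⟩, ⟨rfl, hb⟩⟩
      · exact Or.inr ⟨⟨rfl, hb⟩, ⟨rfl, ha⟩⟩

lemma wG_inl (I : V → Bool) {j k : V} (hjk : j ≠ k) (a b : Bool) :
    wG (⊤ : SimpleGraph V) I (Sum.inl s((j, a), (k, b))) =
      if I j = a ∧ I k = b then 1 else 0 := by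
  letI : DecidableRel (⊤ : SimpleGraph V).Adj := Classical.decRel _
  unfold wG
  rw [Finsupp.add_apply, Finsupp.finset_sum_apply, Finsupp.finset_sum_apply]
  have h2 : (∑ l ∈ univ.filter (fun l : V => ∀ k, ¬(⊤ : SimpleGraph V).Adj l k),
      (Finsupp.single (Sum.inr (l, I l)) 1 :
        (Sym2 (V × Bool) ⊕ (V × Bool)) →₀ ℕ) (Sum.inl s((j, a), (k, b)))) = 0 :=
    Finset.sum_eq_zero fun l _ => by rw [Finsupp.single_apply, if_neg (by simp)]
  rw [h2, add_zero]
  have hmem : s(j, k) ∈ (⊤ : SimpleGraph V).edgeFinset := by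
    rw [SimpleGraph.mem_edgeFinset, SimpleGraph.mem_edgeSet, SimpleGraph.top_adj]
    exact hjk
  by_cases h : I j = a ∧ I k = b
  · rw [if_pos h]
    rw [Finset.sum_eq_single s(j, k)]
    · rw [Finsupp.single_apply, if_pos]
      rw [Sym2.map_pair_eq, h.1, h.2]
    · intro e he hne
      rw [Finsupp.single_apply, if_neg]
      intro hc
      exact hne ((sym2_map_eq_iff I hjk a b e).1 (Sum.inl_injective hc)).1
    · intro hc; exact absurd hmem hc
  · rw [if_neg h]
    refine Finset.sum_eq_zero fun e he => ?_
    rw [Finsupp.single_apply, if_neg]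
    intro hc
    exact h ((sym2_map_eq_iff I hjk a b e).1 (Sum.inl_injective hc)).2

lemma wG_inr (G : SimpleGraph V) {l : V} (hl : ∀ k, ¬ G.Adj l k) (I : V → Bool) (a : Bool) :
    wG G I (Sum.inr (l, a)) = if I l = a then 1 else 0 := by
  letI : DecidableRel G.Adj := Classical.decRel _
  unfold wG
  rw [Finsupp.add_apply, Finsupp.finset_sum_apply, Finsupp.finset_sum_apply]
  have h1 : (∑ e ∈ G.edgeFinset,
      (Finsupp.single (Sum.inl (Sym2.map (fun v => (v, I v)) e)) 1 :
        (Sym2 (V × Bool) ⊕ (V × Bool)) →₀ ℕ) (Sum.inr (l, a))) = 0 :=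
    Finset.sum_eq_zero fun e _ => by rw [Finsupp.single_apply, if_neg (by simp)]
  rw [h1, zero_add]
  rw [Finset.sum_eq_single l]
  · rw [Finsupp.single_apply]
    by_cases h : I l = a
    · rw [if_pos (by rw [h]), if_pos h]
    · rw [if_neg (by simp [h]), if_neg h]
  · intro l' _ hne
    rw [Finsupp.single_apply, if_neg (by simp [hne])]
  · intro hc
    exact absurd (Finset.mem_filter.2 ⟨Finset.mem_univ l, hl⟩) hc

lemma countP_singleton' {α : Type*} (p : α → Prop) [DecidablePred p] (a : α) :
    Multiset.countP p {a} = if p a then 1 else 0 := by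
  rw [show ({a} : Multiset α) = a ::ₘ 0 from rfl, Multiset.countP_cons,
    Multiset.countP_zero, Nat.zero_add]

lemma countP_toMultiset {α : Type*} (d : α →₀ ℕ) (p : α → Prop) [DecidablePred p] :
    Multiset.countP p (Finsupp.toMultiset d) =
      ∑ I ∈ d.support, d I * (if p I then 1 else 0) := by
  rw [Finsupp.toMultiset_apply, Finsupp.sum, ← Multiset.coe_countPAddMonoidHom,
    map_sum (Multiset.countPAddMonoidHom p) _ d.support]
  refine Finset.sum_congr rfl fun I _ => ?_
  rw [show (Multiset.countPAddMonoidHom p) (d I • {I}) =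
      Multiset.countP p (d I • {I}) from rfl,
    Multiset.countP_nsmul, countP_singleton']

lemma card_toMultiset_of_homog {f : MvPolynomial (V → Bool) ℂ} {m : ℕ}
    (hh : f.IsHomogeneous m) {d : (V → Bool) →₀ ℕ} (hd : coeff d f ≠ 0) :
    Multiset.card (Finsupp.toMultiset d) = m := by
  have h1 : Multiset.card (Finsupp.toMultiset d) = Finsupp.degree d := by
    rw [Finsupp.card_toMultiset]; rfl
  rw [h1, DFunLike.congr_fun (Finsupp.degree_eq_weight_one (R := ℕ) (σ := V → Bool)) d]
  exact hh hd

/-- The pair-marginal coordinates of `Aexp ⊤ d`. -/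
lemma Aexp_coord_pair (d : (V → Bool) →₀ ℕ) {j k : V} (hjk : j ≠ k) (a b : Bool) :
    Aexp (⊤ : SimpleGraph V) d (Sum.inl s((j, a), (k, b))) =
      Multiset.countP (fun s => s j = a ∧ s k = b) (Finsupp.toMultiset d) := by
  rw [Aexp_apply, countP_toMultiset]
  exact Finset.sum_congr rfl fun I _ => by rw [wG_inl I hjk a b]

/-- The single-vertex-marginal coordinates of `Aexp G d` at an isolated vertex. -/
lemma Aexp_coord_single (G : SimpleGraph V) (d : (V → Bool) →₀ ℕ) {l : V}
    (hl : ∀ k, ¬ G.Adj l k) (a : Bool) :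
    Aexp G d (Sum.inr (l, a)) =
      Multiset.countP (fun s => s l = a) (Finsupp.toMultiset d) := by
  rw [Aexp_apply, countP_toMultiset]
  exact Finset.sum_congr rfl fun I _ => by rw [wG_inr G hl I a]

section
open Multiset


private lemma harith' : ∀ ct cf : ℕ, 0 < ct → 0 < cf → ct + cf ≤ 3 →
    ct = 1 ∨ cf = 1 := by intro ct cf _ _ _; omega

/-- Core combinatorial lemma: a multiset of at most 3 binary tables is determined by its
one- and two-way marginals. -/
theorem multiset_marginal_determined (n : ℕ) :
    ∀ S T : Multiset (V → Bool), card S = n → card T = n → n ≤ 3 →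
    (∀ j a, countP (fun s => s j = a) S = countP (fun s => s j = a) T) →
    (∀ j k, j ≠ k → ∀ a b,
      countP (fun s => s j = a ∧ s k = b) S = countP (fun s => s j = a ∧ s k = b) T) →
    S = T := by
  classical
  induction n with
  | zero =>
    intro S T hS hT _ _ _
    rw [Multiset.card_eq_zero] at hS hT; rw [hS, hT]
  | succ m ih =>
    intro S T hS hT hn h1 h2
    by_cases hconst : ∀ x ∈ S, ∀ y ∈ S, x = y
    · -- constant case
      obtain ⟨x, hx⟩ : ∃ x, x ∈ S := by
        rw [← card_pos_iff_exists_mem, hS]; omega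
      have hSrep : S = replicate (m+1) x :=
        eq_replicate.2 ⟨hS, fun b hb => hconst b hb x hx⟩
      have hTrep : T = replicate (m+1) x := by
        refine eq_replicate.2 ⟨hT, fun t ht => funext fun j => ?_⟩
        have hall : countP (fun s => s j = x j) S = card S :=
          countP_eq_card.2 fun y hy => by rw [hconst y hy x hx]
        have : countP (fun s => s j = x j) T = card T := by
          rw [← h1 j (x j), hall, hS, hT]
        exact countP_eq_card.1 this t ht
      rw [hSrep, hTrep]
    · -- non-constant case
      push_neg at hconst
      obtain ⟨x, hxS, y, hyS, hxy⟩ := hconst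
      obtain ⟨j0, hj0⟩ := Function.ne_iff.1 hxy
      have hxa : ∀ a : Bool, x j0 = a ∨ y j0 = a := by
        intro a
        by_cases h : y j0 = a
        · exact Or.inr h
        · refine Or.inl ?_
          rw [Bool.eq_not_of_ne hj0, Bool.eq_not_of_ne h, Bool.not_not]
      have hsum : countP (fun s => s j0 = true) S
          + countP (fun s => (s j0 = false)) S = m + 1 := by
        have h := card_eq_countP_add_countP (fun s : V → Bool => s j0 = true) S
        rw [hS] at h
        rw [h]
        congr 1
        refine countP_congr rfl fun s _ => by simp
      have hpos : ∀ a : Bool, 0 < countP (fun s => s j0 = a) S := by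
        intro a
        rcases hxa a with h | h
        · exact countP_pos.2 ⟨x, hxS, h⟩
        · exact countP_pos.2 ⟨y, hyS, h⟩
      obtain ⟨a, ha⟩ : ∃ a : Bool, countP (fun s => s j0 = a) S = 1 := by
        rcases harith' _ _ (hpos true) (hpos false) (by rw [hsum]; exact hn) with h | h
        · exact ⟨true, h⟩
        · exact ⟨false, h⟩
      have haT : countP (fun s => s j0 = a) T = 1 := by rw [← h1 j0 a, ha]
      obtain ⟨u, huS, hu⟩ : ∃ u ∈ S, u j0 = a :=
        countP_pos.1 (by rw [ha]; norm_num)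
      obtain ⟨v, hvT, hv⟩ : ∃ v ∈ T, v j0 = a :=
        countP_pos.1 (by rw [haT]; norm_num)
      obtain ⟨S', rfl⟩ : ∃ S', S = u ::ₘ S' := ⟨S.erase u, (cons_erase huS).symm⟩
      obtain ⟨T', rfl⟩ : ∃ T', T = v ::ₘ T' := ⟨T.erase v, (cons_erase hvT).symm⟩
      have hS' : ∀ z ∈ S', z j0 ≠ a := by
        rw [countP_cons, if_pos hu] at ha
        exact countP_eq_zero.1 (Nat.succ_injective ha)
      have hT' : ∀ z ∈ T', z j0 ≠ a := by
        rw [countP_cons, if_pos hv] at haT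
        exact countP_eq_zero.1 (Nat.succ_injective haT)
      -- show u = v
      have huv : u = v := by
        funext k
        by_cases hk : k = j0
        · subst hk; rw [hu, hv]
        · have hh := h2 j0 k (fun h => hk h.symm) a (u k)
          have hl : countP (fun s => s j0 = a ∧ s k = u k) (u ::ₘ S') = 1 := by
            rw [countP_cons, if_pos ⟨hu, rfl⟩,
              countP_eq_zero.2 fun z hz hz' => hS' z hz hz'.1]
          have hr : countP (fun s => s j0 = a ∧ s k = u k) (v ::ₘ T')
              = if v j0 = a ∧ v k = u k then 1 else 0 := by
            rw [countP_cons, countP_eq_zero.2 fun z hz hz' => hT' z hz hz'.1,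
              Nat.zero_add]
          rw [hl, hr] at hh
          by_contra hne
          rw [if_neg (fun h => hne h.2.symm)] at hh
          exact one_ne_zero hh
      subst huv
      -- recurse
      have hcard : card S' = m := by
        rw [Multiset.card_cons] at hS; exact Nat.succ_injective hS
      have hcard' : card T' = m := by
        rw [Multiset.card_cons] at hT; exact Nat.succ_injective hT
      have h1' : ∀ j a, countP (fun s => s j = a) S' = countP (fun s => s j = a) T' := by
        intro j a'
        have hh := h1 j a'
        rw [countP_cons, countP_cons] at hh
        exact Nat.add_right_cancel hh
      have h2' : ∀ j k, j ≠ k → ∀ a b,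
          countP (fun s => s j = a ∧ s k = b) S' = countP (fun s => s j = a ∧ s k = b) T' := by
        intro j k hjk a' b
        have hh := h2 j k hjk a' b
        rw [countP_cons, countP_cons] at hh
        exact Nat.add_right_cancel hh
      rw [ih S' T' hcard hcard' (Nat.le_of_succ_le hn) h1' h2']

end

lemma Aexp_inj3 (d d' : (V → Bool) →₀ ℕ)
    (h3 : Multiset.card (Finsupp.toMultiset d) = 3)
    (h3' : Multiset.card (Finsupp.toMultiset d') = 3)
    (hA : Aexp (⊤ : SimpleGraph V) d = Aexp (⊤ : SimpleGraph V) d') : d = d' := by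
  have key : Finsupp.toMultiset d = Finsupp.toMultiset d' := by
    refine multiset_marginal_determined 3 _ _ h3 h3' (le_refl 3) ?_ ?_
    · intro j a
      by_cases hex : ∃ k, k ≠ j
      · obtain ⟨k, hk⟩ := hex
        have hjk : j ≠ k := fun h => hk h.symm
        have split : ∀ S : Multiset (V → Bool),
            Multiset.countP (fun s => s j = a) S =
              Multiset.countP (fun s => s j = a ∧ s k = true) S +
                Multiset.countP (fun s => s j = a ∧ s k = false) S := by
          intro S
          rw [Multiset.countP_eq_countP_filter_add S _ (fun s => s k = true),
            Multiset.countP_filter, Multiset.countP_filter]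
          congr 1
          exact Multiset.countP_congr rfl fun s _ => by simp
        rw [split, split, ← Aexp_coord_pair d hjk a true, ← Aexp_coord_pair d hjk a false,
          ← Aexp_coord_pair d' hjk a true, ← Aexp_coord_pair d' hjk a false, hA]
      · push_neg at hex
        have hl : ∀ k, ¬ (⊤ : SimpleGraph V).Adj j k := by
          intro k h
          exact ((SimpleGraph.top_adj j k).1 h) (hex k).symm
        rw [← Aexp_coord_single _ d hl a, ← Aexp_coord_single _ d' hl a, hA]
    · intro j k hjk a b
      rw [← Aexp_coord_pair d hjk a b, ← Aexp_coord_pair d' hjk a b, hA]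
  have h := congrArg Multiset.toFinsupp key
  rwa [Finsupp.toMultiset_toFinsupp, Finsupp.toMultiset_toFinsupp] at h

lemma homog3_eq_zero (f : MvPolynomial (V → Bool) ℂ)
    (hker : phi (⊤ : SimpleGraph V) f = 0) (hh : f.IsHomogeneous 3) : f = 0 := by
  have hco : ∀ d0, coeff d0 f = 0 := by
    intro d0
    by_cases hd0 : coeff d0 f = 0
    · exact hd0
    exfalso
    have hmem : d0 ∈ f.support := by rwa [MvPolynomial.mem_support_iff]
    have h1 : (0 : MvPolynomial (Sym2 (V × Bool) ⊕ (V × Bool)) ℂ) =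
        ∑ d ∈ f.support, monomial (Aexp (⊤ : SimpleGraph V) d) (coeff d f) :=
      calc (0 : MvPolynomial (Sym2 (V × Bool) ⊕ (V × Bool)) ℂ)
          = phi (⊤ : SimpleGraph V) f := hker.symm
        _ = phi (⊤ : SimpleGraph V) (∑ d ∈ f.support, monomial d (coeff d f)) := by
            rw [← f.as_sum]
        _ = ∑ d ∈ f.support, monomial (Aexp (⊤ : SimpleGraph V) d) (coeff d f) := by
            rw [map_sum]
            exact Finset.sum_congr rfl fun d _ => phi_monomial _ d _
    have h2 := congrArg (coeff (Aexp (⊤ : SimpleGraph V) d0)) h1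
    rw [coeff_zero, coeff_sum, Finset.sum_eq_single d0
      (fun d hd hne => by
        rw [coeff_monomial, if_neg]
        intro hc
        exact hne (Aexp_inj3 d d0
          (card_toMultiset_of_homog hh (MvPolynomial.mem_support_iff.1 hd))
          (card_toMultiset_of_homog hh hd0) hc))
      (fun hc => absurd hmem hc)] at h2
    rw [coeff_monomial, if_pos rfl] at h2
    exact hd0 h2.symm
  exact MvPolynomial.ext _ _ fun d => by rw [hco d, coeff_zero]


end AuxiliaryLemmas

/-- for every `n ≥ 1`, every homogeneous element of degree 3 of the toric
ideal of the complete graph `K_n` lies in the ideal generated by the elements of the toric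
ideal of degree at most 2; equivalently, `I_{K_n}` has no minimal generators of degree 3. -/
theorem completeGraph_no_cubic_generators (n : ℕ) (hn : 1 ≤ n) :
    (∀ f ∈ toricIdeal (⊤ : SimpleGraph (Fin n)), f.IsHomogeneous 3 →
      f ∈ Ideal.span {g : MvPolynomial (Fin n → Bool) ℂ |
        g ∈ toricIdeal (⊤ : SimpleGraph (Fin n)) ∧ g.totalDegree ≤ 2}) ∧
    ∀ f : MvPolynomial (Fin n → Bool) ℂ, f.IsHomogeneous 3 →
      ¬ IsMinimalGenerator (⊤ : SimpleGraph (Fin n)) f := by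
  have key : ∀ f : MvPolynomial (Fin n → Bool) ℂ,
      f ∈ toricIdeal (⊤ : SimpleGraph (Fin n)) → f.IsHomogeneous 3 → f = 0 := by
    intro f hf hh
    refine homog3_eq_zero f ?_ hh
    exact RingHom.mem_ker.1 hf
  constructor
  · intro f hf hh
    rw [key f hf hh]
    exact Ideal.zero_mem _
  · rintro f hh ⟨hf1, hf2⟩
    rw [key f hf1 hh] at hf2
    exact hf2 (Submodule.zero_mem _)

end BinaryGraphModels
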